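/- Vector Sub-Encodings (Lemma B.11): Let m > n be naturals, let U_ψ be an (α,a,ε)-VE for the ℓ2-normalized vector |ψ⟩ ∈ ℂ^{2^m}, and let V_φ be a (β, m−n, δ)-VE for the ℓ2-normalized vector |φ⟩ ∈ ℂ^{2^n} such that ‖|ψ⟩ − V_φ|0⟩_m‖₂ ≤ γ. Then U_ψ is an (αβ, a + m − n, δ + β(ε + γ))-VE for |φ⟩, i.e. ‖|φ⟩ − αβ(⟨0|_{a+m−n} ⊗ I_n)U_ψ|0⟩_{a+m}‖₂ ≤ δ + β(ε + γ). -/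

import Mathlib

open scoped Kronecker Matrix

noncomputable section

/-- Reinterpret a plain function as an element of `EuclideanSpace`. -/
def toEuc {𝕜 : Type*} [RCLike 𝕜] {ι : Type*} (v : ι → 𝕜) : EuclideanSpace 𝕜 ι := WithLp.toLp 2 v

/-- The vector encoded in the first block of the first column of `U`:
`(⟨0| ⊗ I) U |0⟩`. -/
def encVec {I N : Type*} [Zero I] [Zero N] (U : Matrix (I × N) (I × N) ℂ) :
    EuclideanSpace ℂ N := toEuc fun i => U (0, i) (0, 0)

/-- `U` is an `(α, ·, ε)`-vector-encoding of `ψ`. -/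
def IsVE {I N : Type*} [Fintype I] [DecidableEq I] [Zero I] [Fintype N] [DecidableEq N] [Zero N]
    (U : Matrix (I × N) (I × N) ℂ) (α ε : ℝ) (ψ : EuclideanSpace ℂ N) : Prop :=
  U ∈ Matrix.unitaryGroup (I × N) ℂ ∧ ‖ψ - (α : ℂ) • encVec U‖ ≤ ε

lemma slice_norm_le {J N : Type*} [Fintype J] [Fintype N]
    (f : EuclideanSpace ℂ (J × N)) (j : J) :
    ‖toEuc (fun i => f (j, i))‖ ≤ ‖f‖ := by
  rw [EuclideanSpace.norm_eq, EuclideanSpace.norm_eq]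
  apply Real.sqrt_le_sqrt
  rw [Fintype.sum_prod_type]
  simp only [toEuc, WithLp.ofLp_toLp]
  refine Finset.single_le_sum (f := fun j' => ∑ i, ‖f (j', i)‖ ^ 2) ?_ (Finset.mem_univ j)
  intro j' _
  positivity

lemma reindex_unitary {I J : Type*} [Fintype I] [DecidableEq I] [Fintype J] [DecidableEq J]
    (e : I ≃ J) {U : Matrix I I ℂ} (hU : U ∈ Matrix.unitaryGroup I ℂ) :
    Matrix.reindex e e U ∈ Matrix.unitaryGroup J ℂ := by
  rw [Matrix.mem_unitaryGroup_iff] at hU ⊢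
  have : (Matrix.reindex e e U) * star (Matrix.reindex e e U)
      = Matrix.reindex e e (U * star U) := by
    simp [Matrix.star_eq_conjTranspose, Matrix.reindex_apply, Matrix.conjTranspose_submatrix,
      Matrix.submatrix_mul_equiv]
  rw [this, hU]
  simp

/-- **Vector sub-encodings** (Lemma B.11).
The `2^m`-dimensional space is written with its tensor splitting
`ℂ^{2^{m-n}} ⊗ ℂ^{2^n}`.  If `Uψ` is an `(α, a, ε)`-VE for `ψ`,
`Vφ` is a `(β, m-n, δ)`-VE for `φ`, and `‖ψ - Vφ|0⟩_m‖₂ ≤ γ`, then `Uψ`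
(with its `a` ancillas grouped together with the top `m-n` qubits, i.e. reindexed
along the product associator) is an `(αβ, a + m - n, δ + β(ε + γ))`-VE for `φ`. -/
theorem vector_sub_encodings
    (a n m : ℕ) (hmn : n < m)
    (α β ε δ γ : ℝ)
    (hα : 1 ≤ α) (hβ : 1 ≤ β) (hε : 0 ≤ ε) (hδ : 0 ≤ δ) (hγ : 0 ≤ γ)
    (Uψ : Matrix (Fin (2^a) × (Fin (2^(m-n)) × Fin (2^n)))
        (Fin (2^a) × (Fin (2^(m-n)) × Fin (2^n))) ℂ)
    (ψ : EuclideanSpace ℂ (Fin (2^(m-n)) × Fin (2^n))) (hψn : ‖ψ‖ = 1)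
    (hUψ : IsVE Uψ α ε ψ)
    (Vφ : Matrix (Fin (2^(m-n)) × Fin (2^n)) (Fin (2^(m-n)) × Fin (2^n)) ℂ)
    (φ : EuclideanSpace ℂ (Fin (2^n))) (hφn : ‖φ‖ = 1)
    (hVφ : IsVE Vφ β δ φ)
    (hclose : ‖ψ - toEuc fun p => Vφ p ((0 : Fin (2^(m-n))), (0 : Fin (2^n)))‖ ≤ γ) :
    IsVE (Matrix.reindex
        (Equiv.prodAssoc (Fin (2^a)) (Fin (2^(m-n))) (Fin (2^n))).symm
        (Equiv.prodAssoc (Fin (2^a)) (Fin (2^(m-n))) (Fin (2^n))).symm Uψ)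
      (α * β) (δ + β * (ε + γ)) φ := by
  obtain ⟨hU1, hU2⟩ := hUψ
  obtain ⟨hV1, hV2⟩ := hVφ
  refine ⟨reindex_unitary _ hU1, ?_⟩
  set x : EuclideanSpace ℂ (Fin (2^(m-n)) × Fin (2^n)) := encVec Uψ with hx
  set w : EuclideanSpace ℂ (Fin (2^(m-n)) × Fin (2^n)) :=
    toEuc fun p => Vφ p ((0 : Fin (2^(m-n))), (0 : Fin (2^n))) with hw
  have hx0 : encVec (Matrix.reindex
        (Equiv.prodAssoc (Fin (2^a)) (Fin (2^(m-n))) (Fin (2^n))).symm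
        (Equiv.prodAssoc (Fin (2^a)) (Fin (2^(m-n))) (Fin (2^n))).symm Uψ)
      = toEuc (fun i => x (0, i)) := by
    ext i
    simp [encVec, toEuc, hx, Matrix.reindex_apply, Equiv.prodAssoc, Prod.ext_iff]
    rfl
  have hslice : ‖encVec Vφ - (α : ℂ) • toEuc (fun i => x (0, i))‖
      ≤ ‖w - (α : ℂ) • x‖ := by
    have : encVec Vφ - (α : ℂ) • toEuc (fun i => x (0, i))
        = toEuc (fun i => (w - (α : ℂ) • x) (0, i)) := by
      ext i; simp [toEuc, hw, encVec]
    rw [this]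
    exact slice_norm_le _ _
  have h2 : ‖w - (α : ℂ) • x‖ ≤ γ + ε := by
    calc ‖w - (α : ℂ) • x‖ ≤ ‖w - ψ‖ + ‖ψ - (α : ℂ) • x‖ := by
          have := norm_sub_le_norm_sub_add_norm_sub w ψ ((α : ℂ) • x)
          linarith [this]
        _ ≤ γ + ε := by
          rw [norm_sub_rev]
          exact add_le_add hclose hU2
  rw [hx0]
  have key : φ - ((α * β : ℝ) : ℂ) • toEuc (fun i => x (0, i))
      = (φ - (β : ℂ) • encVec Vφ)
        + (β : ℂ) • (encVec Vφ - (α : ℂ) • toEuc (fun i => x (0, i))) := by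
    push_cast
    rw [smul_sub, smul_smul]
    ring_nf
    module
  calc ‖φ - ((α * β : ℝ) : ℂ) • toEuc (fun i => x (0, i))‖
      ≤ ‖φ - (β : ℂ) • encVec Vφ‖
        + ‖(β : ℂ) • (encVec Vφ - (α : ℂ) • toEuc (fun i => x (0, i)))‖ := by
        rw [key]; exact norm_add_le _ _
    _ ≤ δ + β * (ε + γ) := by
        rw [norm_smul]
        have hβ0 : (0:ℝ) < β := by linarith
        have : ‖(β : ℂ)‖ = β := by
          simp [Complex.norm_real, abs_of_pos hβ0]
        rw [this]
        have h3 : ‖encVec Vφ - (α : ℂ) • toEuc (fun i => x (0, i))‖ ≤ ε + γ := by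
          calc _ ≤ ‖w - (α : ℂ) • x‖ := hslice
            _ ≤ γ + ε := h2
            _ = ε + γ := by ring
        have := mul_le_mul_of_nonneg_left h3 (le_of_lt hβ0)
        linarith [hV2]
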